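/- Let G = (V,E) be a simple connected undirected graph containing a vertex i* adjacent to all other vertices, and let the maximum degree among vertices in V∖{i*} be Δ_max. Then every eigenvalue of the reduced Laplacian L(i*) (the Laplacian of G with the row and column of i* deleted) lies in the interval [1, 2Δ_max − 1]. -/
import Mathlib


open Matrix BigOperators

theorem reduced_laplacian_eigenvalue_bounds
    {V : Type*} [Fintype V] [DecidableEq V]
    (G : SimpleGraph V) [DecidableRel G.Adj]
    (hconn : G.Connected)
    (istar : V) (hstar : ∀ v : V, v ≠ istar → G.Adj istar v)
    (Δmax : ℕ)
    (hΔub : ∀ v : V, v ≠ istar → G.degree v ≤ Δmax)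
    (hΔmem : ∃ v : V, v ≠ istar ∧ G.degree v = Δmax) :
    ∀ μ : ℝ,
      Module.End.HasEigenvalue
        (Matrix.toLin'
          ((G.lapMatrix ℝ).submatrix
            (fun v : {v : V // v ≠ istar} => (v : V))
            (fun v : {v : V // v ≠ istar} => (v : V)))) μ →
      μ ∈ Set.Icc (1 : ℝ) (2 * (Δmax : ℝ) - 1) := by
  intro μ hμ
  obtain ⟨k, hk⟩ := eigenvalue_mem_ball hμ
  set A := (G.lapMatrix ℝ).submatrix
      (fun v : {v : V // v ≠ istar} => (v : V))
      (fun v : {v : V // v ≠ istar} => (v : V)) with hA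
  have hadjk : G.Adj istar (k : V) := hstar _ k.2
  have hdeg1 : 1 ≤ G.degree (k : V) := by
    rw [← SimpleGraph.card_neighborFinset_eq_degree]
    exact Finset.card_pos.mpr ⟨istar, by simp [hadjk.symm]⟩
  -- diagonal entry
  have hdiag : A k k = (G.degree (k : V) : ℝ) := by
    simp [hA, Matrix.submatrix_apply, SimpleGraph.lapMatrix, Matrix.sub_apply,
      SimpleGraph.degMatrix]
  -- off-diagonal radius
  have hrad : ∑ j ∈ Finset.univ.erase k, ‖A k j‖ = (G.degree (k : V) : ℝ) - 1 := by
    have h1 : ∀ j ∈ Finset.univ.erase k,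
        ‖A k j‖ = (if G.Adj (k : V) (j : V) then (1 : ℝ) else 0) := by
      intro j hj
      have hne : (j : V) ≠ (k : V) := fun h => (Finset.mem_erase.mp hj).1 (Subtype.ext h)
      simp only [hA, Matrix.submatrix_apply, SimpleGraph.lapMatrix, Matrix.sub_apply,
        SimpleGraph.degMatrix, SimpleGraph.adjMatrix_apply, Matrix.of_apply,
        Matrix.diagonal_apply_ne _ (fun h => hne h.symm)]
      by_cases h : G.Adj (k : V) (j : V) <;> simp [h]
    rw [Finset.sum_congr rfl h1]
    have h2 : ∑ j ∈ Finset.univ.erase k, (if G.Adj (k : V) (j : V) then (1 : ℝ) else 0)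
        = ∑ j : {v : V // v ≠ istar}, (if G.Adj (k : V) (j : V) then (1 : ℝ) else 0) := by
      rw [Finset.sum_erase]
      simp [G.irrefl]
    rw [h2]
    have h3 : ∑ j : {v : V // v ≠ istar}, (if G.Adj (k : V) (j : V) then (1 : ℝ) else 0)
        = ∑ v ∈ Finset.univ.erase istar, (if G.Adj (k : V) v then (1 : ℝ) else 0) := by
      rw [Finset.sum_subtype (p := fun v => v ≠ istar) _ (fun x => by simp) _]
    rw [h3, Finset.sum_boole]
    have h4 : (Finset.univ.erase istar).filter (fun v => G.Adj (k : V) v)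
        = (G.neighborFinset (k : V)).erase istar := by
      ext w
      simp [Finset.mem_erase, and_comm]
    rw [h4, Finset.card_erase_of_mem (by simp [hadjk.symm]),
      SimpleGraph.card_neighborFinset_eq_degree, Nat.cast_sub hdeg1]
    simp
  rw [hdiag, hrad, Metric.mem_closedBall, Real.dist_eq, abs_sub_le_iff] at hk
  have hdub : (G.degree (k : V) : ℝ) ≤ (Δmax : ℝ) := by
    exact_mod_cast hΔub _ k.2
  constructor
  · linarith [hk.2]
  · linarith [hk.1]
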